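/- Online gradient ascent regret bound for weakly DR-submodular functions: Let f₁,…,f_T : X → ℝ₊ be differentiable, monotone, γ-weakly DR-submodular on a box X ⊇ P, where P ⊆ X is a closed convex set with diameter D, and suppose ‖∇f_t(x)‖ ≤ G for all t and x ∈ P. If x₁ ∈ P and x_{t+1} = Π_P(x_t + η_t ∇f_t(x_t)) with η_t = D/(G√t), then (γ²/(γ²+1)) Σ_{t=1}^T f_t(x*) - Σ_{t=1}^T f_t(x_t) ≤ 3γDG√T / (2(γ²+1)), where x* = argmax_{x ∈ P} Σ_t f_t(x). -/

import Mathlib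

open Finset

private lemma hasDeriv_comp {n : ℕ} (f : EuclideanSpace ℝ (Fin n) → ℝ) (hf : Differentiable ℝ f)
    (x v : EuclideanSpace ℝ (Fin n)) (s : ℝ) :
    HasDerivAt (fun s : ℝ => f (x + s • v)) (inner ℝ (gradient f (x + s • v)) v : ℝ) s := by
  have h1 : HasDerivAt (fun s : ℝ => x + s • v) v s := by
    simpa using ((hasDerivAt_id s).smul_const v).const_add x
  have h2 := ((hf (x + s • v)).hasGradientAt.hasFDerivAt).comp_hasDerivAt s h1
  rw [InnerProductSpace.toDual_apply_apply] at h2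
  exact h2

private lemma up_lemma {n : ℕ} {X : Set (EuclideanSpace ℝ (Fin n))}
    {γ : ℝ} (hγ0 : 0 < γ)
    {f : EuclideanSpace ℝ (Fin n) → ℝ} (hdiff : Differentiable ℝ f)
    (hweakDR : ∀ x ∈ X, ∀ y ∈ X, (∀ i, x i ≤ y i) → ∀ i, γ * gradient f y i ≤ gradient f x i)
    (x v : EuclideanSpace ℝ (Fin n)) (hv : ∀ i, 0 ≤ v i)
    (hseg : ∀ s ∈ Set.Icc (0:ℝ) 1, x + s • v ∈ X) :
    γ * (f (x + v) - f x) ≤ inner ℝ (gradient f x) v := by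
  set c : ℝ := inner ℝ (gradient f x) v with hc
  set φ : ℝ → ℝ := fun s => γ * f (x + s • v) - s * c with hφ
  have hder : ∀ s : ℝ, HasDerivAt φ (γ * (inner ℝ (gradient f (x + s • v)) v : ℝ) - c) s := by
    intro s
    have h := ((hasDeriv_comp f hdiff x v s).const_mul γ).sub ((hasDerivAt_id s).mul_const c)
    simp only [one_mul] at h
    exact h
  have hanti : AntitoneOn φ (Set.Icc 0 1) := by
    apply antitoneOn_of_deriv_nonpos (convex_Icc 0 1)
    · exact (Differentiable.continuous (fun s => (hder s).differentiableAt)).continuousOn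
    · exact fun s _ => (hder s).differentiableAt.differentiableWithinAt
    · intro s hs
      rw [interior_Icc] at hs
      rw [(hder s).deriv]
      have hmem : x + s • v ∈ X := hseg s ⟨le_of_lt hs.1, le_of_lt hs.2⟩
      have hx0 : x ∈ X := by simpa using hseg 0 ⟨le_refl 0, zero_le_one⟩
      have hle : ∀ i, x i ≤ (x + s • v) i := by
        intro i
        simp only [PiLp.add_apply, PiLp.smul_apply, smul_eq_mul]
        nlinarith [hv i, hs.1.le]
      have hDR := hweakDR x hx0 (x + s • v) hmem hle
      have : γ * (inner ℝ (gradient f (x + s • v)) v : ℝ) ≤ c := by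
        rw [hc]
        simp only [PiLp.inner_apply, RCLike.inner_apply, conj_trivial, Finset.mul_sum]
        apply Finset.sum_le_sum
        intro i _
        have := mul_le_mul_of_nonneg_right (hDR i) (hv i)
        nlinarith
      linarith
  have := hanti (Set.left_mem_Icc.2 zero_le_one) (Set.right_mem_Icc.2 zero_le_one) zero_le_one
  simp only [hφ, zero_smul, add_zero, one_smul, zero_mul, one_mul, sub_zero] at this
  linarith

private lemma down_lemma {n : ℕ} {X : Set (EuclideanSpace ℝ (Fin n))}
    {γ : ℝ} (hγ0 : 0 < γ)
    {f : EuclideanSpace ℝ (Fin n) → ℝ} (hdiff : Differentiable ℝ f)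
    (hweakDR : ∀ x ∈ X, ∀ y ∈ X, (∀ i, x i ≤ y i) → ∀ i, γ * gradient f y i ≤ gradient f x i)
    (x w : EuclideanSpace ℝ (Fin n)) (hw : ∀ i, 0 ≤ w i)
    (hseg : ∀ s ∈ Set.Icc (0:ℝ) 1, (x - w) + s • w ∈ X) :
    γ * (inner ℝ (gradient f x) w : ℝ) ≤ f x - f (x - w) := by
  set c : ℝ := inner ℝ (gradient f x) w with hc
  set φ : ℝ → ℝ := fun s => γ * s * c - f ((x - w) + s • w) with hφ
  have hder : ∀ s : ℝ, HasDerivAt φ (γ * c - (inner ℝ (gradient f ((x - w) + s • w)) w : ℝ)) s := by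
    intro s
    have h1 : HasDerivAt (fun s : ℝ => γ * s * c) (γ * c) s := by
      simpa [mul_comm, mul_assoc, mul_left_comm] using
        (((hasDerivAt_id s).const_mul γ).mul_const c)
    exact h1.sub (hasDeriv_comp f hdiff (x - w) w s)
  have hanti : AntitoneOn φ (Set.Icc 0 1) := by
    apply antitoneOn_of_deriv_nonpos (convex_Icc 0 1)
    · exact (Differentiable.continuous (fun s => (hder s).differentiableAt)).continuousOn
    · exact fun s _ => (hder s).differentiableAt.differentiableWithinAt
    · intro s hs
      rw [interior_Icc] at hs
      rw [(hder s).deriv]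
      have hmem : (x - w) + s • w ∈ X := hseg s ⟨le_of_lt hs.1, le_of_lt hs.2⟩
      have hx : x ∈ X := by
        have := hseg 1 (Set.right_mem_Icc.2 zero_le_one); simpa using this
      have hle : ∀ i, ((x - w) + s • w) i ≤ x i := by
        intro i
        simp only [PiLp.add_apply, PiLp.sub_apply, PiLp.smul_apply, smul_eq_mul]
        nlinarith [hw i, hs.2.le]
      have hDR := hweakDR ((x - w) + s • w) hmem x hx hle
      have : γ * c ≤ (inner ℝ (gradient f ((x - w) + s • w)) w : ℝ) := by
        rw [hc]
        simp only [PiLp.inner_apply, RCLike.inner_apply, conj_trivial, Finset.mul_sum]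
        apply Finset.sum_le_sum
        intro i _
        have := mul_le_mul_of_nonneg_right (hDR i) (hw i)
        nlinarith
      linarith
  have := hanti (Set.left_mem_Icc.2 zero_le_one) (Set.right_mem_Icc.2 zero_le_one) zero_le_one
  simp only [hφ, zero_smul, add_zero, one_smul, zero_mul, mul_zero, mul_one, sub_add_cancel] at this
  linarith

private lemma key_lemma {n : ℕ} (b : EuclideanSpace ℝ (Fin n))
    {X : Set (EuclideanSpace ℝ (Fin n))}
    (hX : X = {y : EuclideanSpace ℝ (Fin n) | ∀ i, y i ∈ Set.Icc 0 (b i)})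
    {γ : ℝ} (hγ0 : 0 < γ)
    {f : EuclideanSpace ℝ (Fin n) → ℝ} (hdiff : Differentiable ℝ f)
    (hnonneg : ∀ x ∈ X, 0 ≤ f x)
    (hmono : ∀ x ∈ X, ∀ y ∈ X, (∀ i, x i ≤ y i) → f x ≤ f y)
    (hweakDR : ∀ x ∈ X, ∀ y ∈ X, (∀ i, x i ≤ y i) → ∀ i, γ * gradient f y i ≤ gradient f x i)
    (x y : EuclideanSpace ℝ (Fin n)) (hx : x ∈ X) (hy : y ∈ X) :
    γ * f y - (γ + 1/γ) * f x ≤ (inner ℝ (gradient f x) (y - x) : ℝ) := by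
  have hxmem : ∀ i, x i ∈ Set.Icc 0 (b i) := by rw [hX] at hx; exact hx
  have hymem : ∀ i, y i ∈ Set.Icc 0 (b i) := by rw [hX] at hy; exact hy
  set v : EuclideanSpace ℝ (Fin n) :=
    (WithLp.equiv 2 (Fin n → ℝ)).symm (fun i => max (y i) (x i) - x i) with hvdef
  set w : EuclideanSpace ℝ (Fin n) :=
    (WithLp.equiv 2 (Fin n → ℝ)).symm (fun i => x i - min (x i) (y i)) with hwdef
  have hvi : ∀ i, v i = max (y i) (x i) - x i := fun i => rfl
  have hwi : ∀ i, w i = x i - min (x i) (y i) := fun i => rfl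
  have hv : ∀ i, 0 ≤ v i := fun i => by rw [hvi]; simp [le_max_right]
  have hw : ∀ i, 0 ≤ w i := fun i => by rw [hwi]; simp [min_le_left]
  -- up direction
  have hsegv : ∀ s ∈ Set.Icc (0:ℝ) 1, x + s • v ∈ X := by
    intro s hs
    rw [hX]
    intro i
    have h1 := (hxmem i).1; have h2 := (hxmem i).2; have h3 := (hymem i).2
    have hxsv : (x + s • v) i = x i + s * (max (y i) (x i) - x i) := by
      simp [hvi, PiLp.add_apply, PiLp.smul_apply, smul_eq_mul]
    rw [hxsv]
    constructor
    · nlinarith [hv i, hs.1, hvi i]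
    · nlinarith [hs.1, hs.2, le_max_left (y i) (x i), max_le h3 h2, hv i, hvi i]
  have hup := up_lemma hγ0 hdiff hweakDR x v hv hsegv
  have hxv : x + v ∈ X := by simpa using hsegv 1 (Set.right_mem_Icc.2 zero_le_one)
  have hyle : f y ≤ f (x + v) := by
    apply hmono y hy (x + v) hxv
    intro i
    have : (x + v) i = max (y i) (x i) := by simp [hvi, PiLp.add_apply]
    rw [this]; exact le_max_left _ _
  -- down direction
  have hsegw : ∀ s ∈ Set.Icc (0:ℝ) 1, (x - w) + s • w ∈ X := by
    intro s hs
    rw [hX]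
    intro i
    have h1 := (hxmem i).1; have h2 := (hxmem i).2; have h4 := (hymem i).1
    have hxsw : ((x - w) + s • w) i = min (x i) (y i) + s * (x i - min (x i) (y i)) := by
      simp [hwi, PiLp.add_apply, PiLp.sub_apply, PiLp.smul_apply, smul_eq_mul]
    rw [hxsw]
    constructor
    · nlinarith [hs.1, hw i, hwi i, le_min h1 h4]
    · nlinarith [hs.1, hs.2, hw i, hwi i, min_le_left (x i) (y i)]
  have hdown := down_lemma hγ0 hdiff hweakDR x w hw hsegw
  have hxw : x - w ∈ X := by simpa using hsegw 0 (Set.left_mem_Icc.2 zero_le_one)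
  have hfxw : 0 ≤ f (x - w) := hnonneg _ hxw
  -- combine
  have hvw : v - w = y - x := by
    ext i
    simp only [PiLp.sub_apply, hvi, hwi]
    rcases le_total (x i) (y i) with h | h
    · rw [max_eq_left h, min_eq_left h]; ring
    · rw [max_eq_right h, min_eq_right h]; ring
  have hsplit : (inner ℝ (gradient f x) (y - x) : ℝ) =
      (inner ℝ (gradient f x) v : ℝ) - (inner ℝ (gradient f x) w : ℝ) := by
    rw [← inner_sub_right, hvw]
  rw [hsplit]
  have h2 : γ * (inner ℝ (gradient f x) w : ℝ) ≤ f x := by linarith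
  have h2' : (inner ℝ (gradient f x) w : ℝ) ≤ f x / γ := by
    rw [le_div_iff₀ hγ0]; linarith [mul_comm γ (inner ℝ (gradient f x) w : ℝ)]
  have e : (γ + 1/γ) * f x = γ * f x + f x / γ := by field_simp
  have h1' : γ * f y - γ * f x ≤ (inner ℝ (gradient f x) v : ℝ) := by nlinarith
  linarith

private lemma proj_contract {n : ℕ} {P : Set (EuclideanSpace ℝ (Fin n))}
    (hPconvex : Convex ℝ P) {z p u : EuclideanSpace ℝ (Fin n)} (hp : p ∈ P) (hu : u ∈ P)
    (hmin : ∀ v ∈ P, ‖z - p‖ ≤ ‖z - v‖) : ‖p - u‖ ≤ ‖z - u‖ := by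
  have hinf : ‖z - p‖ = ⨅ w : P, ‖z - w‖ := by
    haveI : Nonempty P := ⟨⟨p, hp⟩⟩
    refine le_antisymm (le_ciInf fun w => hmin w w.2) ?_
    have hbdd : BddBelow (Set.range fun w : P => ‖z - (w : EuclideanSpace ℝ (Fin n))‖) :=
      ⟨0, by rintro r ⟨w, rfl⟩; exact norm_nonneg _⟩
    exact ciInf_le hbdd ⟨p, hp⟩
  have hineq := (norm_eq_iInf_iff_real_inner_le_zero hPconvex hp).1 hinf u hu
  have hexp : ‖z - u‖^2 = ‖z - p‖^2 + 2 * (inner ℝ (z - p) (p - u) : ℝ) + ‖p - u‖^2 := by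
    have : z - u = (z - p) + (p - u) := by abel
    rw [this, @norm_add_sq_real]
  have hinner : 0 ≤ (inner ℝ (z - p) (p - u) : ℝ) := by
    have : (inner ℝ (z - p) (p - u) : ℝ) = -(inner ℝ (z - p) (u - p) : ℝ) := by
      rw [← inner_neg_right]; congr 1; abel
    rw [this]; linarith
  have hsq : ‖p - u‖^2 ≤ ‖z - u‖^2 := by nlinarith [norm_nonneg (z - p)]
  have := Real.sqrt_le_sqrt hsq
  simpa [Real.sqrt_sq (norm_nonneg _)] using this

private lemma sqrt_sum_le (T : ℕ) :
    ∑ t ∈ Finset.Icc 1 T, (1 : ℝ) / Real.sqrt t ≤ 2 * Real.sqrt T := by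
  induction T with
  | zero => simp
  | succ T ih =>
    rw [Finset.sum_Icc_succ_top (Nat.le_add_left 1 T)]
    have hs : (0:ℝ) ≤ Real.sqrt T := Real.sqrt_nonneg _
    have hr : (0:ℝ) < Real.sqrt (T+1) := Real.sqrt_pos.2 (by positivity)
    have hr2 : Real.sqrt (T+1) ^ 2 = (T:ℝ)+1 := Real.sq_sqrt (by positivity)
    have hs2 : Real.sqrt T ^ 2 = (T:ℝ) := Real.sq_sqrt (Nat.cast_nonneg T)
    have key : 1 / Real.sqrt (T+1) ≤ 2 * Real.sqrt (T+1) - 2 * Real.sqrt T := by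
      rw [div_le_iff₀ hr]
      nlinarith [sq_nonneg (Real.sqrt (T+1) - Real.sqrt T)]
    have : ((T:ℝ)+1) = ((T+1 : ℕ) : ℝ) := by push_cast; ring
    rw [← this] at *
    push_cast
    linarith
private lemma telesc (c a : ℕ → ℝ) (M : ℝ) (hc0 : 0 ≤ c 0) (hcmono : ∀ t, c t ≤ c (t+1)) :
    ∀ T, (∀ t, 1 ≤ t → t ≤ T + 1 → 0 ≤ a t ∧ a t ≤ M) →
    ∑ t ∈ Finset.Icc 1 T, (a t - a (t+1)) * c t ≤ (M - a (T+1)) * c T := by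
  have hcnonneg : ∀ t, 0 ≤ c t := by
    intro t; induction t with
    | zero => exact hc0
    | succ t ih => exact le_trans ih (hcmono t)
  intro T
  induction T with
  | zero =>
    intro h
    have := h 1 le_rfl le_rfl
    rw [show Finset.Icc 1 0 = (∅ : Finset ℕ) from Finset.Icc_eq_empty (by omega), Finset.sum_empty]
    nlinarith [hcnonneg 0]
  | succ T ih =>
    intro h
    have hIH := ih (fun t ht1 ht2 => h t ht1 (le_trans ht2 (Nat.le_succ _)))
    rw [Finset.sum_Icc_succ_top (Nat.le_add_left 1 T)]
    have h1 := h (T+1) (Nat.le_add_left 1 T) (Nat.le_succ _)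
    have h2 := h (T+2) (by omega) le_rfl
    have hc := hcmono T
    have hcT1 := hcnonneg (T+1)
    nlinarith [h1.1, h1.2, h2.1, h2.2]

private lemma dsq_c (D G st : ℝ) (hD : D ≠ 0) :
    D ^ 2 * (G * st / (2 * D)) = D * G * st / 2 := by field_simp

private lemma eta_c1 (D G st : ℝ) (hD : D ≠ 0) (hG : G ≠ 0) (hst : st ≠ 0) :
    2 * (D / (G * st)) * (G * st / (2 * D)) = 1 := by field_simp

private lemma eta_c2 (D G st : ℝ) (hD : D ≠ 0) (hG : G ≠ 0) (hst : st ≠ 0) :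
    (D / (G * st)) ^ 2 * G ^ 2 * (G * st / (2 * D)) = D * G / (2 * st) := by
  field_simp

set_option maxHeartbeats 1000000 in
/-- Online (projected) gradient ascent regret bound for monotone γ-weakly
DR-submodular functions:
`(γ²/(γ²+1)) Σ f_t(x*) - Σ f_t(x_t) ≤ 3γDG√T / (2(γ²+1))`. -/
theorem online_gradient_ascent_weakly_dr_regret
    {n : ℕ} (T : ℕ) (hT : 1 ≤ T)
    (b : EuclideanSpace ℝ (Fin n)) (hb : ∀ i, 0 ≤ b i)
    (X : Set (EuclideanSpace ℝ (Fin n)))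
    (hX : X = {y : EuclideanSpace ℝ (Fin n) | ∀ i, y i ∈ Set.Icc 0 (b i)})
    (P : Set (EuclideanSpace ℝ (Fin n)))
    (hPX : P ⊆ X) (hPne : P.Nonempty) (hPclosed : IsClosed P) (hPconvex : Convex ℝ P)
    (D G γ : ℝ) (hD : Metric.diam P = D) (hG : 0 < G) (hγ : γ ∈ Set.Ioc (0 : ℝ) 1)
    (f : ℕ → EuclideanSpace ℝ (Fin n) → ℝ)
    (hdiff : ∀ t, Differentiable ℝ (f t))
    (hnonneg : ∀ t, ∀ x ∈ X, 0 ≤ f t x)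
    (hmono : ∀ t, ∀ x ∈ X, ∀ y ∈ X, (∀ i, x i ≤ y i) → f t x ≤ f t y)
    (hweakDR : ∀ t, ∀ x ∈ X, ∀ y ∈ X, (∀ i, x i ≤ y i) →
      ∀ i, γ * gradient (f t) y i ≤ gradient (f t) x i)
    (hgradbound : ∀ t ∈ Finset.Icc 1 T, ∀ x ∈ P, ‖gradient (f t) x‖ ≤ G)
    (η : ℕ → ℝ) (hη : ∀ t, η t = D / (G * Real.sqrt t))
    (x : ℕ → EuclideanSpace ℝ (Fin n)) (hx1 : x 1 ∈ P)
    (hupdate : ∀ t ∈ Finset.Icc 1 T,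
      x (t + 1) ∈ P ∧
      ∀ v ∈ P, ‖x t + η t • gradient (f t) (x t) - x (t + 1)‖ ≤
        ‖x t + η t • gradient (f t) (x t) - v‖)
    (xstar : EuclideanSpace ℝ (Fin n)) (hxstar : xstar ∈ P)
    (hopt : ∀ y ∈ P, ∑ t ∈ Finset.Icc 1 T, f t y ≤ ∑ t ∈ Finset.Icc 1 T, f t xstar) :
    γ ^ 2 / (γ ^ 2 + 1) * ∑ t ∈ Finset.Icc 1 T, f t xstar -
        ∑ t ∈ Finset.Icc 1 T, f t (x t) ≤
      3 * γ * D * G * Real.sqrt T / (2 * (γ ^ 2 + 1)) := by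
  obtain ⟨hγ0, hγ1⟩ := hγ
  have hpos : (0:ℝ) < γ ^ 2 + 1 := by positivity
  have hD0 : 0 ≤ D := hD ▸ Metric.diam_nonneg
  -- P is bounded
  have hXbounded : Bornology.IsBounded X := by
    apply (Metric.isBounded_closedBall
      (x := (0 : EuclideanSpace ℝ (Fin n))) (r := ‖b‖)).subset
    intro y hy
    rw [hX] at hy
    rw [Metric.mem_closedBall, dist_zero_right, EuclideanSpace.norm_eq,
      EuclideanSpace.norm_eq]
    apply Real.sqrt_le_sqrt
    apply Finset.sum_le_sum
    intro i _
    have h1 := (hy i).1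
    have h2 := (hy i).2
    rw [Real.norm_eq_abs, Real.norm_eq_abs, abs_of_nonneg h1, abs_of_nonneg (hb i)]
    nlinarith
  have hPbounded : Bornology.IsBounded P := hXbounded.subset hPX
  have hdist : ∀ u ∈ P, ∀ v ∈ P, dist u v ≤ D := by
    intro u hu v hv; rw [← hD]; exact Metric.dist_le_diam_of_mem hPbounded hu hv
  -- iterates stay in P
  have hxP : ∀ t, 1 ≤ t → t ≤ T + 1 → x t ∈ P := by
    intro t h1 h2
    rcases Nat.lt_or_ge t 2 with h | h
    · have : t = 1 := by omega
      rw [this]; exact hx1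
    · obtain ⟨s, rfl⟩ : ∃ s, t = s + 1 := ⟨t - 1, by omega⟩
      exact (hupdate s (Finset.mem_Icc.2 ⟨by omega, by omega⟩)).1
  -- abbreviations
  set S := ∑ t ∈ Finset.Icc 1 T, f t xstar with hS
  set SA := ∑ t ∈ Finset.Icc 1 T, f t (x t) with hSA
  rcases eq_or_lt_of_le hD0 with hDzero | hDpos
  · -- degenerate case D = 0
    have hxt : ∀ t ∈ Finset.Icc 1 T, x t = xstar := by
      intro t ht
      rw [Finset.mem_Icc] at ht
      have h1 : dist (x t) xstar ≤ D := hdist _ (hxP t ht.1 (by omega)) _ hxstar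
      rw [← hDzero] at h1
      exact dist_le_zero.1 h1
    have hSeq : SA = S := Finset.sum_congr rfl (fun t ht => by rw [hxt t ht])
    have hSnn : 0 ≤ S := Finset.sum_nonneg fun t _ => hnonneg t xstar (hPX hxstar)
    have hfrac : γ ^ 2 / (γ ^ 2 + 1) ≤ 1 := by rw [div_le_one hpos]; nlinarith
    rw [hSeq, ← hDzero]
    have : 3 * γ * 0 * G * Real.sqrt T / (2 * (γ ^ 2 + 1)) = 0 := by ring
    rw [this]
    nlinarith [mul_le_mul_of_nonneg_right hfrac hSnn]
  -- main case D > 0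
  have hηpos : ∀ t : ℕ, 1 ≤ t → 0 < η t := by
    intro t ht
    rw [hη t]
    have : (0:ℝ) < Real.sqrt t := Real.sqrt_pos.2 (by exact_mod_cast Nat.pos_of_ne_zero (by omega))
    positivity
  set c : ℕ → ℝ := fun t => G * Real.sqrt t / (2 * D) with hc
  have hc0 : 0 ≤ c 0 := by simp [hc]
  have hcmono : ∀ t, c t ≤ c (t + 1) := by
    intro t
    simp only [hc]
    gcongr
    omega
  -- bounds on squared distances
  set a : ℕ → ℝ := fun t => ‖x t - xstar‖ ^ 2 with ha
  have habound : ∀ t, 1 ≤ t → t ≤ T + 1 → 0 ≤ a t ∧ a t ≤ D ^ 2 := by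
    intro t h1 h2
    constructor
    · positivity
    · have := hdist _ (hxP t h1 h2) _ hxstar
      rw [dist_eq_norm] at this
      simp only [ha]
      nlinarith [norm_nonneg (x t - xstar)]
  -- per-step inequality
  have hstep : ∀ t ∈ Finset.Icc 1 T,
      (inner ℝ (gradient (f t) (x t)) (xstar - x t) : ℝ) ≤
        (a t - a (t + 1)) * c t + D * G / (2 * Real.sqrt t) := by
    intro t ht
    rw [Finset.mem_Icc] at ht
    set g := gradient (f t) (x t) with hg
    have hxtP : x t ∈ P := hxP t ht.1 (by omega)
    have hgb : ‖g‖ ≤ G := hgradbound t (Finset.mem_Icc.2 ht) (x t) hxtP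
    have hcontr : ‖x (t + 1) - xstar‖ ≤ ‖x t + η t • g - xstar‖ :=
      proj_contract hPconvex (hupdate t (Finset.mem_Icc.2 ht)).1 hxstar
        (hupdate t (Finset.mem_Icc.2 ht)).2
    have hst : (0:ℝ) < Real.sqrt t :=
      Real.sqrt_pos.2 (by exact_mod_cast Nat.pos_of_ne_zero (by omega))
    have hηt : η t = D / (G * Real.sqrt t) := hη t
    have hexp : ‖x t + η t • g - xstar‖ ^ 2 =
        ‖x t - xstar‖ ^ 2 + 2 * (η t * (inner ℝ (x t - xstar) g : ℝ)) +
          (η t) ^ 2 * ‖g‖ ^ 2 := by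
      have hz : x t + η t • g - xstar = (x t - xstar) + η t • g := by abel
      rw [hz, norm_add_sq_real, real_inner_smul_right, norm_smul, Real.norm_eq_abs,
        abs_of_nonneg (hηpos t ht.1).le, mul_pow]
    have hsq : a (t + 1) ≤ a t + 2 * (η t * (inner ℝ (x t - xstar) g : ℝ)) +
        (η t) ^ 2 * G ^ 2 := by
      have h1 : ‖x (t + 1) - xstar‖ ^ 2 ≤ ‖x t + η t • g - xstar‖ ^ 2 := by
        nlinarith [norm_nonneg (x (t + 1) - xstar), norm_nonneg (x t + η t • g - xstar)]
      rw [hexp] at h1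
      have h2 : (η t) ^ 2 * ‖g‖ ^ 2 ≤ (η t) ^ 2 * G ^ 2 := by
        have hg2 : ‖g‖ ^ 2 ≤ G ^ 2 := by nlinarith [norm_nonneg g, hgb]
        exact mul_le_mul_of_nonneg_left hg2 (sq_nonneg (η t))
      have ea : a t = ‖x t - xstar‖ ^ 2 := rfl
      have ea1 : a (t + 1) = ‖x (t + 1) - xstar‖ ^ 2 := rfl
      rw [ea, ea1]
      linarith
    have hinner : (inner ℝ g (xstar - x t) : ℝ) = -(inner ℝ (x t - xstar) g : ℝ) := by
      have h : xstar - x t = -(x t - xstar) := by abel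
      rw [h, inner_neg_right, real_inner_comm]
    rw [hinner]
    have hstne : Real.sqrt t ≠ 0 := ne_of_gt hst
    have hGne : G ≠ 0 := ne_of_gt hG
    have hDne : D ≠ 0 := ne_of_gt hDpos
    have e1 : 2 * η t * c t = 1 := by
      rw [hηt]; simp only [hc]; exact eta_c1 D G (Real.sqrt t) hDne hGne hstne
    have e2 : (η t) ^ 2 * G ^ 2 * c t = D * G / (2 * Real.sqrt t) := by
      rw [hηt]; simp only [hc]; exact eta_c2 D G (Real.sqrt t) hDne hGne hstne
    have hcnn : 0 ≤ c t := by simp only [hc]; positivity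
    have hmulc := mul_le_mul_of_nonneg_right hsq hcnn
    have expand : (a t + 2 * (η t * (inner ℝ (x t - xstar) g : ℝ)) + (η t) ^ 2 * G ^ 2) * c t
        = a t * c t + 2 * η t * c t * (inner ℝ (x t - xstar) g : ℝ)
          + (η t) ^ 2 * G ^ 2 * c t := by ring
    rw [expand, e1, e2, one_mul] at hmulc
    have expand2 : (a t - a (t + 1)) * c t = a t * c t - a (t + 1) * c t := by ring
    rw [expand2]
    linarith
  -- sum the per-step inequalities
  have hsum1 : ∑ t ∈ Finset.Icc 1 T, (inner ℝ (gradient (f t) (x t)) (xstar - x t) : ℝ) ≤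
      ∑ t ∈ Finset.Icc 1 T, ((a t - a (t + 1)) * c t + D * G / (2 * Real.sqrt t)) :=
    Finset.sum_le_sum hstep
  have hsum2 : ∑ t ∈ Finset.Icc 1 T, ((a t - a (t + 1)) * c t + D * G / (2 * Real.sqrt t)) =
      (∑ t ∈ Finset.Icc 1 T, (a t - a (t + 1)) * c t) +
      ∑ t ∈ Finset.Icc 1 T, D * G / (2 * Real.sqrt t) := Finset.sum_add_distrib
  have htel : ∑ t ∈ Finset.Icc 1 T, (a t - a (t + 1)) * c t ≤ D * G * Real.sqrt T / 2 := by
    have h1 := telesc c a (D ^ 2) hc0 hcmono T habound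
    have h2 : (D ^ 2 - a (T + 1)) * c T ≤ D ^ 2 * c T := by
      have hcnn : 0 ≤ c T := by simp only [hc]; positivity
      have := (habound (T + 1) (by omega) le_rfl).1
      nlinarith
    have h3 : D ^ 2 * c T = D * G * Real.sqrt T / 2 := by
      simp only [hc]; exact dsq_c D G (Real.sqrt T) (ne_of_gt hDpos)
    linarith
  have hhar : ∑ t ∈ Finset.Icc 1 T, D * G / (2 * Real.sqrt t) ≤ D * G * Real.sqrt T := by
    have h1 : ∀ t ∈ Finset.Icc 1 T, D * G / (2 * Real.sqrt t) =
        (D * G / 2) * (1 / Real.sqrt t) := by intro t _; ring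
    rw [Finset.sum_congr rfl h1, ← Finset.mul_sum]
    have h2 := sqrt_sum_le T
    have hDG : (0:ℝ) ≤ D * G / 2 := by positivity
    nlinarith
  have hgrad_total : ∑ t ∈ Finset.Icc 1 T,
      (inner ℝ (gradient (f t) (x t)) (xstar - x t) : ℝ) ≤
      3 / 2 * (D * G * Real.sqrt T) := by
    rw [hsum2] at hsum1
    linarith
  -- apply the key lemma per step
  have hkey : ∀ t ∈ Finset.Icc 1 T,
      γ * f t xstar - (γ + 1 / γ) * f t (x t) ≤
        (inner ℝ (gradient (f t) (x t)) (xstar - x t) : ℝ) := by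
    intro t ht
    rw [Finset.mem_Icc] at ht
    exact key_lemma b hX hγ0 (hdiff t) (hnonneg t) (hmono t) (hweakDR t)
      (x t) xstar (hPX (hxP t ht.1 (by omega))) (hPX hxstar)
  have hsumkey : γ * S - (γ + 1 / γ) * SA ≤ 3 / 2 * (D * G * Real.sqrt T) := by
    have h1 : ∑ t ∈ Finset.Icc 1 T, (γ * f t xstar - (γ + 1 / γ) * f t (x t)) ≤
        ∑ t ∈ Finset.Icc 1 T, (inner ℝ (gradient (f t) (x t)) (xstar - x t) : ℝ) :=
      Finset.sum_le_sum hkey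
    have h2 : ∑ t ∈ Finset.Icc 1 T, (γ * f t xstar - (γ + 1 / γ) * f t (x t)) =
        γ * S - (γ + 1 / γ) * SA := by
      rw [Finset.sum_sub_distrib, ← Finset.mul_sum, ← Finset.mul_sum]
    linarith
  -- final algebra
  have hmul := mul_le_mul_of_nonneg_left hsumkey hγ0.le
  have hlhs : γ * (γ * S - (γ + 1 / γ) * SA) = γ ^ 2 * S - (γ ^ 2 + 1) * SA := by
    field_simp
  rw [hlhs] at hmul
  have hgoal : γ ^ 2 / (γ ^ 2 + 1) * S - SA = (γ ^ 2 * S - (γ ^ 2 + 1) * SA) / (γ ^ 2 + 1) := by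
    field_simp
  have hrhs : 3 * γ * D * G * Real.sqrt T / (2 * (γ ^ 2 + 1)) =
      (γ * (3 / 2 * (D * G * Real.sqrt T))) / (γ ^ 2 + 1) := by
    field_simp
  rw [hgoal, hrhs]
  gcongr
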